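/- Let n ≥ 1, L = 4n+1, and let E(φ) be the total ground-state energy of N↑ = 2n+1 and N↓ = 2n free fermions on an L-site ring with flux φ, i.e. E(φ) = E_{2n+1}(φ) + E_{2n}(φ) where E_N(φ) is the sum of the N smallest values among {−2cos((2πl+φ)/L) : 0 ≤ l ≤ L−1}. Then E attains its minimum over [0, 2π) exactly at φ = π/2 and φ = 3π/2. -/

import Mathlib

set_option maxHeartbeats 1000000


open Real

/-- The multiset of single-particle energies `-2 cos((2πl+φ)/L)`, `l = 0, …, L-1`. -/
noncomputable def ringLevels (L : ℕ) (φ : ℝ) : Multiset ℝ :=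
  (Finset.range L).val.map (fun l => -2 * Real.cos ((2 * π * l + φ) / L))

/-- Sum of the `N` smallest single-particle energies. -/
noncomputable def ringEnergy (L N : ℕ) (φ : ℝ) : ℝ :=
  (((ringLevels L φ).sort (· ≤ ·)).take N).sum

private lemma ringLevels_eq (L : ℕ) (φ : ℝ) :
    ringLevels L φ = (Finset.range L).val.map (fun l : ℕ => -2 * Real.cos ((2 * π * (l:ℝ) + φ) / L)) := by
  show Multiset.map _ (Multiset.bind _ _) = _
  rw [show (fun a : ℕ => (pure ((a:ℕ):ℝ) : Multiset ℝ)) = (fun a : ℕ => ({((a:ℕ):ℝ)} : Multiset ℝ)) from rfl,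
    Multiset.bind_singleton, Multiset.map_map]
  rfl

private lemma take_sort_sum (s t : Multiset ℝ) (h : ∀ a ∈ s, ∀ b ∈ t, a ≤ b) :
    (((s + t).sort (· ≤ ·)).take (Multiset.card s)).sum = s.sum := by
  have hsorted : ((s.sort (· ≤ ·)) ++ (t.sort (· ≤ ·))).Pairwise (· ≤ ·) := by
    rw [List.pairwise_append]
    exact ⟨Multiset.pairwise_sort .., Multiset.pairwise_sort ..,
      fun a ha b hb => h a (Multiset.mem_sort _ |>.mp ha) b (Multiset.mem_sort _ |>.mp hb)⟩
  have hperm : ((s + t).sort (· ≤ ·)).Perm ((s.sort (· ≤ ·)) ++ (t.sort (· ≤ ·))) := by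
    rw [← Multiset.coe_eq_coe, ← Multiset.coe_add]
    rw [Multiset.sort_eq, Multiset.sort_eq, Multiset.sort_eq]
  have heq := List.Perm.eq_of_pairwise' (Multiset.pairwise_sort ..) hsorted hperm
  rw [heq, List.take_left' (by rw [Multiset.length_sort])]
  rw [← Multiset.sum_coe, Multiset.sort_eq]

private lemma ringEnergy_eq_sum (L : ℕ) (φ : ℝ) (S : Finset ℕ) (hS : S ⊆ Finset.range L)
    (h : ∀ a ∈ S, ∀ b ∈ Finset.range L \ S,
        -2 * Real.cos ((2*π*a + φ)/L) ≤ -2 * Real.cos ((2*π*b + φ)/L)) :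
    ringEnergy L S.card φ = ∑ l ∈ S, -2 * Real.cos ((2*π*l + φ)/L) := by
  have hval : (Finset.range L).val = S.val + (Finset.range L \ S).val := by
    rw [Finset.sdiff_val, add_tsub_cancel_of_le (Finset.val_le_iff.mpr hS)]
  rw [ringEnergy, ringLevels_eq, hval, Multiset.map_add]
  have hcard : S.card = Multiset.card (S.val.map (fun l : ℕ => -2 * Real.cos ((2*π*(l:ℝ) + φ)/L))) := by
    rw [Multiset.card_map]; rfl
  rw [hcard, take_sort_sum]
  · rfl
  · intro a ha b hb
    obtain ⟨x, hx, rfl⟩ := Multiset.mem_map.mp ha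
    obtain ⟨y, hy, rfl⟩ := Multiset.mem_map.mp hb
    exact h x hx y hy

/-- Pairwise comparison: levels in the window are below levels outside. -/
private lemma window_cmp (n p K : ℕ) (hn : 1 ≤ n) (hp1 : 2*p ≤ K+1) (hK1 : 2*n ≤ K)
    (hK2 : K ≤ 2*p) (hK3 : K ≤ 2*n+1)
    (φ : ℝ) (hφ0 : 0 ≤ φ) (hφπ : φ ≤ π) :
    ∀ a ∈ Finset.range p ∪ Finset.Ico (3*n+1) (4*n+1),
    ∀ b ∈ Finset.range (4*n+1) \ (Finset.range p ∪ Finset.Ico (3*n+1) (4*n+1)),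
      -2 * Real.cos ((2*π*a + φ)/((4*n+1 : ℕ):ℝ)) ≤ -2 * Real.cos ((2*π*b + φ)/((4*n+1 : ℕ):ℝ)) := by
  intro a ha b hb
  set Lr : ℝ := ((4*n+1 : ℕ):ℝ) with hLrdef
  have hLr : (0:ℝ) < Lr := by positivity
  have hLrval : Lr = 4*(n:ℝ)+1 := by rw [hLrdef]; push_cast; ring
  have hKr : (K:ℝ) ≤ 2*(n:ℝ)+1 := by exact_mod_cast hK3
  have hKr2 : 2*(n:ℝ) ≤ (K:ℝ) := by exact_mod_cast hK1
  have hπ := pi_pos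
  have hmidub : (K:ℝ)*π/Lr ≤ π := by
    rw [div_le_iff₀ hLr]
    nlinarith [mul_le_mul_of_nonneg_right hKr pi_pos.le]
  have hmidlb : 0 ≤ (K:ℝ)*π/Lr := by positivity
  suffices h : Real.cos ((2*π*b + φ)/Lr) ≤ (Real.cos ((K:ℝ)*π/Lr)) ∧
      Real.cos ((K:ℝ)*π/Lr) ≤ Real.cos ((2*π*a + φ)/Lr) by
    nlinarith [h.1, h.2]
  constructor
  · -- unchosen b
    have hb' : p ≤ b ∧ b ≤ 3*n := by
      simp only [Finset.mem_sdiff, Finset.mem_union, Finset.mem_range, Finset.mem_Ico] at hb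
      omega
    have hbr1 : (p:ℝ) ≤ (b:ℝ) := by exact_mod_cast hb'.1
    have hbr2 : (b:ℝ) ≤ 3*(n:ℝ) := by exact_mod_cast hb'.2
    have hpK : (K:ℝ) ≤ 2*(p:ℝ) := by exact_mod_cast hK2
    by_cases hcase : b ≤ 2*n
    · have hbr3 : (b:ℝ) ≤ 2*(n:ℝ) := by exact_mod_cast hcase
      apply Real.cos_le_cos_of_nonneg_of_le_pi hmidlb
      · rw [div_le_iff₀ hLr]
        nlinarith [mul_le_mul_of_nonneg_right hbr3 pi_pos.le]
      · gcongr
        nlinarith [mul_le_mul_of_nonneg_right (hpK.trans (by linarith : 2*(p:ℝ) ≤ 2*(b:ℝ))) pi_pos.le]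
    · have hbr4 : 2*(n:ℝ)+1 ≤ (b:ℝ) := by
        have : 2*n+1 ≤ b := by omega
        exact_mod_cast this
      have hrw : (2*π*b + φ)/Lr = 2*π - (2*π*Lr - 2*π*b - φ)/Lr := by
        field_simp; ring
      rw [hrw, Real.cos_two_pi_sub]
      apply Real.cos_le_cos_of_nonneg_of_le_pi hmidlb
      · rw [div_le_iff₀ hLr]
        nlinarith [mul_le_mul_of_nonneg_right hbr4 pi_pos.le]
      · gcongr
        nlinarith [mul_le_mul_of_nonneg_right hbr2 pi_pos.le,
          mul_le_mul_of_nonneg_right hKr pi_pos.le]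
  · -- chosen a
    rcases Finset.mem_union.mp ha with ha' | ha'
    · have har : 2*(a:ℝ) + 2 ≤ 2*(p:ℝ) := by
        have : a + 1 ≤ p := Finset.mem_range.mp ha'
        have h2 : (a:ℝ) + 1 ≤ (p:ℝ) := by exact_mod_cast this
        linarith
      have hpr : 2*(p:ℝ) ≤ (K:ℝ)+1 := by exact_mod_cast hp1
      apply Real.cos_le_cos_of_nonneg_of_le_pi _ hmidub
      · gcongr
        nlinarith [mul_le_mul_of_nonneg_right (show 2*(a:ℝ)+1 ≤ (K:ℝ) by linarith) pi_pos.le]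
      · apply div_nonneg _ hLr.le
        nlinarith [mul_nonneg pi_pos.le (Nat.cast_nonneg (α := ℝ) a)]
    · have ha'' := Finset.mem_Ico.mp ha'
      have har1 : 3*(n:ℝ)+1 ≤ (a:ℝ) := by exact_mod_cast ha''.1
      have har2 : (a:ℝ) ≤ 4*(n:ℝ) := by
        have : a ≤ 4*n := by omega
        exact_mod_cast this
      have hrw : (2*π*a + φ)/Lr = 2*π - (2*π*Lr - 2*π*a - φ)/Lr := by
        field_simp; ring
      rw [hrw, Real.cos_two_pi_sub]
      apply Real.cos_le_cos_of_nonneg_of_le_pi _ hmidub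
      · gcongr
        nlinarith [mul_le_mul_of_nonneg_right har1 pi_pos.le,
          mul_le_mul_of_nonneg_right hKr2 pi_pos.le]
      · apply div_nonneg _ hLr.le
        nlinarith [mul_le_mul_of_nonneg_right har2 pi_pos.le]


private lemma tele (v x : ℝ) (m : ℕ) :
    2 * Real.sin v * ∑ l ∈ Finset.range m, Real.cos (x + l*(2*v))
      = Real.sin (x + 2*m*v - v) - Real.sin (x - v) := by
  induction m with
  | zero => simp
  | succ m ih =>
    rw [Finset.sum_range_succ, mul_add, ih]
    have key : Real.sin ((x + 2*m*v) + v) - Real.sin ((x + 2*m*v) - v)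
        = 2 * Real.sin v * Real.cos (x + 2*m*v) := by
      rw [Real.sin_add, Real.sin_sub]; ring
    have e1 : x + 2*((m:ℕ)+1:ℝ)*v - v = (x + 2*m*v) + v := by ring
    have e2 : x + (m:ℝ)*(2*v) = x + 2*m*v := by ring
    push_cast
    rw [e1, e2]
    linarith [key]

private lemma ringEnergy_window (n p K : ℕ) (hn : 1 ≤ n) (hp1 : 2*p ≤ K+1) (hK1 : 2*n ≤ K)
    (hK2 : K ≤ 2*p) (hK3 : K ≤ 2*n+1) (φ : ℝ) (hφ0 : 0 ≤ φ) (hφπ : φ ≤ π) :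
    ringEnergy (4*n+1) (p+n) φ
      = ∑ l ∈ Finset.range p, -2*Real.cos ((2*π*l + φ)/((4*n+1:ℕ):ℝ))
        + ∑ k ∈ Finset.range n, -2*Real.cos ((2*π*((3*n+1+k:ℕ):ℝ) + φ)/((4*n+1:ℕ):ℝ)) := by
  have hp0 : p ≤ n+1 := by omega
  set S : Finset ℕ := Finset.range p ∪ Finset.Ico (3*n+1) (4*n+1) with hSdef
  have hdisj : Disjoint (Finset.range p) (Finset.Ico (3*n+1) (4*n+1)) := by
    rw [Finset.disjoint_left]
    intro x hx hx'
    rw [Finset.mem_range] at hx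
    rw [Finset.mem_Ico] at hx'
    omega
  have hcard : S.card = p + n := by
    rw [hSdef, Finset.card_union_of_disjoint hdisj, Finset.card_range, Nat.card_Ico]
    omega
  have hsub : S ⊆ Finset.range (4*n+1) := by
    intro x hx
    rw [hSdef, Finset.mem_union, Finset.mem_range, Finset.mem_Ico] at hx
    rw [Finset.mem_range]
    omega
  have h := ringEnergy_eq_sum (4*n+1) φ S hsub (window_cmp n p K hn hp1 hK1 hK2 hK3 φ hφ0 hφπ)
  rw [hcard] at h
  rw [h, hSdef, Finset.sum_union hdisj, Finset.sum_Ico_eq_sum_range,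
    show 4*n+1 - (3*n+1) = n by omega]

private lemma E_closed (n : ℕ) (hn : 1 ≤ n) (φ : ℝ) (hφ0 : 0 ≤ φ) (hφπ : φ ≤ π) :
    ringEnergy (4*n+1) (2*n+1) φ + ringEnergy (4*n+1) (2*n) φ
      = -(2*(1+Real.cos (π/((4*n+1:ℕ):ℝ)))/Real.sin (π/((4*n+1:ℕ):ℝ)))
          * Real.sin ((φ + 2*n*π)/((4*n+1:ℕ):ℝ)) := by
  have hLr : (0:ℝ) < ((4*n+1:ℕ):ℝ) := by positivity
  set Lr : ℝ := ((4*n+1:ℕ):ℝ) with hLrdef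
  have hLrval : Lr = 4*(n:ℝ)+1 := by rw [hLrdef]; push_cast; ring
  set v : ℝ := π/Lr with hv
  set w : ℝ := φ/Lr with hw
  have hπv : π = (4*(n:ℝ)+1)*v := by
    rw [hv, hLrval]; field_simp; try ring
  have hE1 := ringEnergy_window n (n+1) (2*n+1) hn (by omega) (by omega) (by omega) (by omega) φ hφ0 hφπ
  have hE2 := ringEnergy_window n n (2*n) hn (by omega) (by omega) (by omega) (by omega) φ hφ0 hφπ
  rw [show n+1+n = 2*n+1 by omega] at hE1
  rw [show n+n = 2*n by omega] at hE2
  have hA : ∀ p : ℕ, (∑ l ∈ Finset.range p, -2*Real.cos ((2*π*l + φ)/Lr))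
      = -2 * ∑ l ∈ Finset.range p, Real.cos (w + l*(2*v)) := by
    intro p
    rw [Finset.mul_sum]
    refine Finset.sum_congr rfl fun l _ => ?_
    congr 2
    rw [hw, hv]
    field_simp
    try ring
  have hC : (∑ k ∈ Finset.range n, -2*Real.cos ((2*π*((3*n+1+k:ℕ):ℝ) + φ)/Lr))
      = -2 * ∑ j ∈ Finset.range n, Real.cos ((2*v - w) + j*(2*v)) := by
    rw [Finset.mul_sum,
      ← Finset.sum_range_reflect (fun j => -2*Real.cos ((2*v - w) + j*(2*v))) n]
    refine Finset.sum_congr rfl fun k hk => ?_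
    have hkn : k < n := Finset.mem_range.mp hk
    have hcast : ((n-1-k:ℕ):ℝ) = (n:ℝ)-1-k := by
      have h1 : (n-1-k) + (k+1) = n := by omega
      have := congrArg (fun m : ℕ => (m:ℝ)) h1
      push_cast at this
      linarith
    congr 1
    rw [hcast]
    have harg : (2*π*((3*n+1+k:ℕ):ℝ) + φ)/Lr
        = 2*π - ((2*v - w) + ((n:ℝ)-1-k)*(2*v)) := by
      have hc2 : ((3*n+1+k:ℕ):ℝ) = 3*(n:ℝ)+1+k := by push_cast; ring
      rw [hc2, hπv, hw, hv, hLrval]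
      field_simp
      try ring
    rw [harg, Real.cos_two_pi_sub]
  rw [hE1, hE2, hA (n+1), hA n, hC]
  have hv0 : 0 < v := by rw [hv]; positivity
  have hnr : (1:ℝ) ≤ (n:ℝ) := by exact_mod_cast hn
  have hLr1 : (1:ℝ) < Lr := by rw [hLrval]; linarith
  have hvπ : v < π := by
    rw [hv, div_lt_iff₀ hLr]
    nlinarith [mul_lt_mul_of_pos_left hLr1 pi_pos]
  have hsv : 0 < Real.sin v := Real.sin_pos_of_pos_of_lt_pi hv0 hvπ
  have hu : (φ + 2*(n:ℝ)*π)/Lr = w + 2*(n:ℝ)*v := by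
    rw [hw, hv]; field_simp; try ring
  rw [hu, show -(2*(1+Real.cos v)/Real.sin v) * Real.sin (w+2*(n:ℝ)*v)
      = (-(2*(1+Real.cos v)) * Real.sin (w+2*(n:ℝ)*v))/Real.sin v by ring,
    eq_div_iff hsv.ne']
  have tA := tele v w (n+1)
  have tB := tele v w n
  have tC := tele v (2*v - w) n
  push_cast at tA tB tC
  have h1 : Real.sin (w + 2*((n:ℝ)+1)*v - v)
      = Real.sin (w+2*(n:ℝ)*v)*Real.cos v + Real.cos (w+2*(n:ℝ)*v)*Real.sin v := by
    rw [show w + 2*((n:ℝ)+1)*v - v = (w+2*(n:ℝ)*v)+v by ring, Real.sin_add]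
  have h2 : Real.sin (w + 2*(n:ℝ)*v - v)
      = Real.sin (w+2*(n:ℝ)*v)*Real.cos v - Real.cos (w+2*(n:ℝ)*v)*Real.sin v := by
    rw [show w + 2*(n:ℝ)*v - v = (w+2*(n:ℝ)*v)-v by ring, Real.sin_sub]
  have h3 : Real.sin (2*v - w + 2*(n:ℝ)*v - v) = Real.sin (w+2*(n:ℝ)*v) := by
    rw [show 2*v - w + 2*(n:ℝ)*v - v = π - (w+2*(n:ℝ)*v) by rw [hπv]; ring, Real.sin_pi_sub]
  have h4 : Real.sin (2*v - w - v) = -Real.sin (w - v) := by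
    rw [show 2*v - w - v = -(w-v) by ring, Real.sin_neg]
  linear_combination (-1)*tA + (-1)*tB + (-2)*tC + (-1)*h1 + (-1)*h2 + (-2)*h3 + 2*h4

private lemma ringLevels_reflect (L : ℕ) (hL : 0 < L) (φ : ℝ) :
    ringLevels L (2*π - φ) = ringLevels L φ := by
  rw [ringLevels_eq, ringLevels_eq]
  have hmap : (Finset.range L).val.map (fun l => L - 1 - l) = (Finset.range L).val := by
    refine (Multiset.Nodup.ext ?_ ?_).mpr ?_
    · refine Multiset.Nodup.map_on ?_ (Finset.range L).nodup
      intro x hx y hy hxy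
      rw [Finset.mem_val, Finset.mem_range] at hx hy
      omega
    · exact (Finset.range L).nodup
    · intro a
      simp only [Multiset.mem_map, Finset.mem_val, Finset.mem_range]
      constructor
      · rintro ⟨x, hx, rfl⟩; omega
      · intro ha; exact ⟨L - 1 - a, by omega, by omega⟩
  conv_rhs => rw [← hmap]
  rw [Multiset.map_map]
  refine Multiset.map_congr rfl ?_
  intro x hx
  rw [Finset.mem_val, Finset.mem_range] at hx
  simp only [Function.comp]
  have hLne : (L:ℝ) ≠ 0 := Nat.cast_ne_zero.mpr hL.ne'
  have hcast : ((L - 1 - x : ℕ) : ℝ) = (L:ℝ) - 1 - x := by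
    have h1 : (L - 1 - x) + (x + 1) = L := by omega
    have := congrArg (fun m : ℕ => (m:ℝ)) h1
    push_cast at this
    linarith
  rw [hcast]
  have harg : (2 * π * ((L:ℝ) - 1 - x) + φ) / L = 2*π - (2 * π * x + (2*π - φ)) / L := by
    field_simp
    ring
  rw [harg, Real.cos_two_pi_sub]

private lemma ringEnergy_reflect (L : ℕ) (hL : 0 < L) (N : ℕ) (φ : ℝ) :
    ringEnergy L N (2*π - φ) = ringEnergy L N φ := by
  rw [ringEnergy, ringEnergy, ringLevels_reflect L hL]

theorem stmt_15 (n : ℕ) (hn : 1 ≤ n) (L : ℕ) (hL : L = 4 * n + 1)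
    (E : ℝ → ℝ) (hE : ∀ φ, E φ = ringEnergy L (2 * n + 1) φ + ringEnergy L (2 * n) φ) :
    {φ ∈ Set.Ico (0 : ℝ) (2 * π) | ∀ ψ ∈ Set.Ico (0 : ℝ) (2 * π), E φ ≤ E ψ}
      = {π / 2, 3 * π / 2} := by
  subst hL
  have hLr : (0:ℝ) < ((4*n+1:ℕ):ℝ) := by positivity
  set Lr : ℝ := ((4*n+1:ℕ):ℝ) with hLrdef
  have hnr : (1:ℝ) ≤ (n:ℝ) := by exact_mod_cast hn
  have hLrval : Lr = 4*(n:ℝ)+1 := by rw [hLrdef]; push_cast; ring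
  set c : ℝ := 2*(1+Real.cos (π/Lr))/Real.sin (π/Lr) with hc
  have hv0 : 0 < π/Lr := by positivity
  have hvπ2 : π/Lr < π/2 := by
    rw [div_lt_div_iff₀ hLr (by norm_num : (0:ℝ) < 2)]
    nlinarith [pi_pos]
  have hsv : 0 < Real.sin (π/Lr) :=
    Real.sin_pos_of_pos_of_lt_pi hv0 (by linarith [pi_pos])
  have hcv : 0 < Real.cos (π/Lr) :=
    Real.cos_pos_of_mem_Ioo ⟨by linarith, hvπ2⟩
  have hcpos : 0 < c := by
    rw [hc]; apply div_pos; nlinarith; exact hsv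
  have hformula : ∀ φ, 0 ≤ φ → φ ≤ π → E φ = -c * Real.sin ((φ + 2*n*π)/Lr) := by
    intro φ h0 h1
    rw [hE φ, E_closed n hn φ h0 h1, hc]
    try ring
  have hrefl : ∀ φ, E (2*π - φ) = E φ := by
    intro φ
    rw [hE, hE, ringEnergy_reflect _ (by omega), ringEnergy_reflect _ (by omega)]
  have hubound : ∀ φ, 0 ≤ φ → φ ≤ π → -c ≤ E φ := by
    intro φ h0 h1
    rw [hformula φ h0 h1]
    have hb := Real.sin_le_one ((φ + 2*n*π)/Lr)
    nlinarith
  have hmin : ∀ ψ ∈ Set.Ico (0:ℝ) (2*π), -c ≤ E ψ := by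
    intro ψ hψ
    obtain ⟨h0, h2⟩ := hψ
    by_cases hψπ : ψ ≤ π
    · exact hubound ψ h0 hψπ
    · have h' := hubound (2*π - ψ) (by linarith) (by linarith)
      rw [hrefl ψ] at h'
      exact h'
  have hEhalf : E (π/2) = -c := by
    rw [hformula (π/2) (by positivity) (by linarith [pi_pos]),
      show (π/2 + 2*(n:ℝ)*π)/Lr = π/2 by rw [hLrval]; field_simp; ring,
      Real.sin_pi_div_two]
    ring
  have hE32 : E (3*π/2) = -c := by
    rw [show (3*π/2 : ℝ) = 2*π - π/2 by ring, hrefl (π/2)]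
    exact hEhalf
  have huniq : ∀ φ, 0 ≤ φ → φ ≤ π → E φ = -c → φ = π/2 := by
    intro φ h0 h1 hEq
    rw [hformula φ h0 h1] at hEq
    set u := (φ + 2*n*π)/Lr with hu
    have hs1 : Real.sin u = 1 := by
      have hcne : -c ≠ 0 := neg_ne_zero.mpr hcpos.ne'
      exact mul_left_cancel₀ hcne (by rw [mul_one]; exact hEq)
    have hu0 : 0 ≤ u := by
      rw [hu]
      apply div_nonneg _ hLr.le
      nlinarith [pi_pos]
    have huπ : u ≤ π := by
      rw [hu, div_le_iff₀ hLr, hLrval]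
      nlinarith [pi_pos, mul_nonneg (Nat.cast_nonneg (α := ℝ) n) pi_pos.le]
    have hcossq : Real.cos u ^ 2 = 0 := by
      nlinarith [Real.sin_sq_add_cos_sq u]
    have hcosu : Real.cos u = 0 := by
      exact pow_eq_zero_iff (by norm_num) |>.mp hcossq
    obtain ⟨k, hk⟩ := Real.cos_eq_zero_iff.mp hcosu
    have hk0 : k = 0 := by
      by_contra hkk
      rcases lt_or_gt_of_ne hkk with h | h
      · have hkr : (k:ℝ) ≤ -1 := by
          have : k ≤ -1 := by omega
          exact_mod_cast this
        nlinarith [pi_pos]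
      · have hkr : (1:ℝ) ≤ (k:ℝ) := by exact_mod_cast h
        nlinarith [pi_pos]
    rw [hk0] at hk
    norm_num at hk
    rw [hu, hLrval] at hk
    field_simp at hk
    linarith
  ext φ
  simp only [Set.mem_setOf_eq, Set.mem_Ico, Set.mem_insert_iff, Set.mem_singleton_iff]
  constructor
  · rintro ⟨⟨h0, h2⟩, hminφ⟩
    have hle : E φ ≤ -c := by
      have h' := hminφ (π/2) ⟨by positivity, by linarith [pi_pos]⟩
      rw [hEhalf] at h'
      exact h'
    have hEφ : E φ = -c := le_antisymm hle (hmin φ ⟨h0, h2⟩)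
    by_cases hφπ : φ ≤ π
    · left; exact huniq φ h0 hφπ hEφ
    · right
      have hrefl' : E (2*π - φ) = -c := by rw [hrefl]; exact hEφ
      have h'' := huniq (2*π - φ) (by linarith) (by linarith) hrefl'
      linarith
  · intro h
    rcases h with rfl | rfl
    · exact ⟨⟨by positivity, by linarith [pi_pos]⟩,
        fun ψ hψ => by rw [hEhalf]; exact hmin ψ hψ⟩
    · exact ⟨⟨by positivity, by linarith [pi_pos]⟩,
        fun ψ hψ => by rw [hE32]; exact hmin ψ hψ⟩
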